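/- The triple integral ∫_{b=0}^{1} ∫_{α=0}^{1-b} ∫_{a=1-b}^{1} ∫_{s=0}^{(a^{-1} - t(b+α))/b} 1 ds da dα db, taken for 0 < t < 1 (so the upper limit of s is nonnegative throughout the region), equals π²/6 - 1 - t/3. -/

import Mathlib

open MeasureTheory Real intervalIntegral

noncomputable def g (b : ℝ) : ℝ := (1 - b) * (-Real.log (1 - b)) / b

lemma g_bound {b : ℝ} (hb : b ∈ Set.Ioc (0:ℝ) 1) : g b ∈ Set.Icc (0:ℝ) 1 := by
  obtain ⟨hb0, hb1⟩ := hb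
  rcases eq_or_lt_of_le hb1 with rfl | hb1
  · simp [g]
  have h1 : (0:ℝ) < 1 - b := by linarith
  have hlog : Real.log (1 - b) ≤ 0 := Real.log_nonpos (by linarith) (by linarith)
  constructor
  · unfold g
    apply div_nonneg _ hb0.le
    exact mul_nonneg (by linarith) (by linarith)
  · unfold g
    rw [div_le_one hb0]
    have h2 : -Real.log (1 - b) ≤ b / (1 - b) := by
      have := Real.log_le_sub_one_of_pos (show (0:ℝ) < (1 - b)⁻¹ by positivity)
      rw [Real.log_inv] at this
      have h3 : (1 - b)⁻¹ - 1 = b / (1 - b) := by field_simp; ring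
      linarith [h3 ▸ this]
    calc (1 - b) * (-Real.log (1 - b)) ≤ (1 - b) * (b / (1 - b)) := by
          exact mul_le_mul_of_nonneg_left h2 h1.le
      _ = b := by field_simp

lemma g_meas : Measurable g := by
  unfold g
  exact (((measurable_const.sub measurable_id).mul ((Real.measurable_log.comp (measurable_const.sub measurable_id)).neg)).div measurable_id)

lemma g_integrable : IntegrableOn g (Set.Ioc (0:ℝ) 1) := by
  apply Integrable.mono' (integrable_const (1:ℝ)) g_meas.aestronglyMeasurable.restrict
  rw [ae_restrict_iff' measurableSet_Ioc]
  filter_upwards with b hb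
  have h := g_bound hb
  rw [Real.norm_eq_abs, abs_of_nonneg h.1]
  exact h.2

lemma telescope_hasSum : HasSum (fun n : ℕ => 1/((n:ℝ)+1) - 1/((n:ℝ)+2)) 1 := by
  rw [hasSum_iff_tendsto_nat_of_nonneg]
  · have h : ∀ n : ℕ, ∑ i ∈ Finset.range n, (1/((i:ℝ)+1) - 1/((i:ℝ)+2)) = 1 - 1/((n:ℝ)+1) := by
      intro n
      induction n with
      | zero => simp
      | succ k ih =>
        rw [Finset.sum_range_succ, ih]
        push_cast
        have h1 : ((k:ℝ)+1) ≠ 0 := by positivity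
        have h2 : ((k:ℝ)+2) ≠ 0 := by positivity
        field_simp
        ring
    simp_rw [h]
    simpa using tendsto_const_nhds.sub (tendsto_one_div_add_atTop_nhds_zero_nat (𝕜 := ℝ))
  · intro i
    have h2 : (1:ℝ)/((i:ℝ)+2) ≤ 1/((i:ℝ)+1) :=
      one_div_le_one_div_of_le (by positivity) (by linarith)
    linarith

lemma basel_shift : HasSum (fun n : ℕ => 1/((n:ℝ)+1)^2) (Real.pi^2/6) := by
  have h := (hasSum_nat_add_iff (f := fun n : ℕ => (1:ℝ)/(n:ℝ)^2) 1).mpr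
    (by simpa using hasSum_zeta_two)
  convert h using 2 with n
  · rfl
  push_cast
  ring

lemma sum_value :
    HasSum (fun n : ℕ => (1/((n:ℝ)+1) - 1/((n:ℝ)+2))/((n:ℝ)+1)) (Real.pi^2/6 - 1) := by
  have h := basel_shift.sub telescope_hasSum
  convert h using 2 with n
  · rfl
  have h1 : ((n:ℝ)+1) ≠ 0 := by positivity
  have h2 : ((n:ℝ)+2) ≠ 0 := by positivity
  field_simp
  ring

lemma F_int (n : ℕ) : (∫ b in Set.Ioc (0:ℝ) 1, (b ^ n - b ^ (n+1)) / ((n:ℝ)+1))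
    = (1/((n:ℝ)+1) - 1/((n:ℝ)+2))/((n:ℝ)+1) := by
  rw [← intervalIntegral.integral_of_le zero_le_one, intervalIntegral.integral_div,
    intervalIntegral.integral_sub (intervalIntegral.intervalIntegrable_pow n)
      (intervalIntegral.intervalIntegrable_pow (n+1)), integral_pow, integral_pow]
  have h1 : ((n:ℝ)+1) ≠ 0 := by positivity
  have h2 : ((n:ℝ)+2) ≠ 0 := by positivity
  push_cast
  field_simp
  ring

lemma g_integral : (∫ b in Set.Ioc (0:ℝ) 1, g b) = Real.pi^2/6 - 1 := by
  have hmeas : ∀ n : ℕ, Integrable (fun b : ℝ => (b ^ n - b ^ (n+1)) / ((n:ℝ)+1))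
      (volume.restrict (Set.Ioc (0:ℝ) 1)) := by
    intro n
    exact ((continuous_pow n).sub (continuous_pow (n+1))).div_const _ |>.integrableOn_Ioc
  have hnorm : ∀ n : ℕ, (∫ b in Set.Ioc (0:ℝ) 1, ‖(b ^ n - b ^ (n+1)) / ((n:ℝ)+1)‖)
      = (1/((n:ℝ)+1) - 1/((n:ℝ)+2))/((n:ℝ)+1) := by
    intro n
    rw [← F_int n]
    apply setIntegral_congr_fun measurableSet_Ioc
    intro b hb
    dsimp only
    rw [Real.norm_eq_abs, abs_of_nonneg]
    exact div_nonneg (sub_nonneg.2 (pow_le_pow_of_le_one hb.1.le hb.2 n.le_succ))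
      (by positivity)
  have hsum : Summable fun n : ℕ =>
      ∫ b in Set.Ioc (0:ℝ) 1, ‖(b ^ n - b ^ (n+1)) / ((n:ℝ)+1)‖ := by
    simp_rw [hnorm]; exact sum_value.summable
  have hswap := MeasureTheory.integral_tsum_of_summable_integral_norm hmeas hsum
  have hpt : ∀ b ∈ Set.Ioc (0:ℝ) 1,
      (∑' n : ℕ, (b ^ n - b ^ (n+1)) / ((n:ℝ)+1)) = g b := by
    intro b hb
    rcases eq_or_lt_of_le hb.2 with rfl | hb1
    · simp [g]
    · have hb0 := hb.1
      have habs : |b| < 1 := by rw [abs_of_pos hb0]; exact hb1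
      have h := (Real.hasSum_pow_div_log_of_abs_lt_one habs).mul_left ((1-b)/b)
      have hbne : b ≠ 0 := ne_of_gt hb0
      have h' : HasSum (fun n : ℕ => (b ^ n - b ^ (n+1)) / ((n:ℝ)+1)) (g b) := by
        convert h using 1
        · rfl
        · funext n
          field_simp
          ring
        · unfold g
          field_simp
      exact h'.tsum_eq
  calc (∫ b in Set.Ioc (0:ℝ) 1, g b)
      = ∫ b in Set.Ioc (0:ℝ) 1, ∑' n : ℕ, (b ^ n - b ^ (n+1)) / ((n:ℝ)+1) :=
        (setIntegral_congr_fun measurableSet_Ioc hpt).symm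
    _ = ∑' n : ℕ, ∫ b in Set.Ioc (0:ℝ) 1, (b ^ n - b ^ (n+1)) / ((n:ℝ)+1) := hswap.symm
    _ = Real.pi^2/6 - 1 := by simp_rw [F_int]; exact sum_value.tsum_eq
lemma lemA (b c : ℝ) (hb0 : 0 < b) (hb1 : b < 1) :
    (∫ a in (1 - b)..1, ∫ _s in (0:ℝ)..((a⁻¹ - c) / b), (1 : ℝ))
      = (-Real.log (1 - b)) / b - c := by
  have h0 : (0:ℝ) ∉ Set.uIcc (1 - b) 1 := by
    rw [Set.uIcc_of_le (by linarith)]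
    intro h; simp at h; linarith
  have hinv : IntervalIntegrable (fun a : ℝ => a⁻¹) volume (1 - b) 1 :=
    intervalIntegrable_inv (fun x hx => by rintro rfl; exact h0 hx) (by fun_prop)
  have h1 : ∀ a : ℝ, (∫ _s in (0:ℝ)..((a⁻¹ - c) / b), (1:ℝ)) = (a⁻¹ - c) / b := by
    intro a; simp
  simp_rw [h1, div_eq_inv_mul]
  rw [intervalIntegral.integral_const_mul, intervalIntegral.integral_sub hinv
    intervalIntegrable_const, integral_inv h0, intervalIntegral.integral_const]
  have hb1' : (0:ℝ) < 1 - b := by linarith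
  rw [one_div, Real.log_inv, smul_eq_mul]
  field_simp
  ring
  

lemma lemB (t b C : ℝ) :
    (∫ α in (0:ℝ)..(1 - b), (C - t * (b + α)))
      = (1 - b) * C - t * (b * (1 - b) + (1 - b) ^ 2 / 2) := by
  have h : (fun α : ℝ => C - t * (b + α)) = fun α => (C - t * b) - t * α := by
    funext α; ring
  rw [h, intervalIntegral.integral_sub intervalIntegrable_const
    ((by fun_prop : Continuous fun α : ℝ => t * α).intervalIntegrable _ _),
    intervalIntegral.integral_const, intervalIntegral.integral_const_mul, integral_id]
  simp only [smul_eq_mul]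
  ring

lemma polyint (t : ℝ) :
    (∫ b in (0:ℝ)..1, t * (b * (1 - b) + (1 - b) ^ 2 / 2)) = t / 3 := by
  have h : (fun b : ℝ => t * (b * (1 - b) + (1 - b) ^ 2 / 2))
      = fun b : ℝ => t / 2 - t / 2 * b ^ 2 := by funext b; ring
  rw [h, intervalIntegral.integral_sub intervalIntegrable_const
    ((by fun_prop : Continuous fun b : ℝ => t / 2 * b ^ 2).intervalIntegrable _ _),
    intervalIntegral.integral_const, intervalIntegral.integral_const_mul, integral_pow]
  norm_num
  ring


/-- The Ω₃ contribution for 0 < t < 1 equals π²/6 - 1 - t/3. -/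
theorem omega3_small_t_integral (t : ℝ) (ht0 : 0 < t) (ht1 : t < 1) :
    (∫ b in (0:ℝ)..1, ∫ α in (0:ℝ)..(1 - b), ∫ a in (1 - b)..1,
        ∫ _s in (0:ℝ)..((a⁻¹ - t * (b + α)) / b), (1 : ℝ))
      = Real.pi ^ 2 / 6 - 1 - t / 3 := by
  have key : ∀ b ∈ Set.Ioo (0:ℝ) 1,
      (∫ α in (0:ℝ)..(1 - b), ∫ a in (1 - b)..1,
          ∫ _s in (0:ℝ)..((a⁻¹ - t * (b + α)) / b), (1:ℝ))
        = g b - t * (b * (1 - b) + (1 - b) ^ 2 / 2) := by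
    intro b hb
    have hA : ∀ α : ℝ, (∫ a in (1 - b)..1,
        ∫ _s in (0:ℝ)..((a⁻¹ - t * (b + α)) / b), (1:ℝ))
        = (-Real.log (1 - b)) / b - t * (b + α) := fun α => lemA b (t * (b + α)) hb.1 hb.2
    simp_rw [hA, lemB]
    unfold g
    ring
  have hcong : (∫ b in (0:ℝ)..1, ∫ α in (0:ℝ)..(1 - b), ∫ a in (1 - b)..1,
        ∫ _s in (0:ℝ)..((a⁻¹ - t * (b + α)) / b), (1:ℝ))
      = ∫ b in (0:ℝ)..1, (g b - t * (b * (1 - b) + (1 - b) ^ 2 / 2)) := by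
    apply intervalIntegral.integral_congr_ae
    have h1 : ∀ᵐ b : ℝ, b ≠ 1 := by
      simpa [ae_iff, not_not, Set.setOf_eq_eq_singleton] using Real.volume_singleton (x := 1)
    filter_upwards [h1] with b hb1 hbmem
    rw [Set.uIoc_of_le zero_le_one] at hbmem
    exact key b ⟨hbmem.1, lt_of_le_of_ne hbmem.2 hb1⟩
  have hgint : IntervalIntegrable g volume 0 1 :=
    (intervalIntegrable_iff_integrableOn_Ioc_of_le zero_le_one).mpr g_integrable
  rw [hcong, intervalIntegral.integral_sub hgint
    ((by fun_prop : Continuous fun b : ℝ =>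
      t * (b * (1 - b) + (1 - b) ^ 2 / 2)).intervalIntegrable _ _),
    polyint, intervalIntegral.integral_of_le zero_le_one, g_integral]
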